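/- Suppose the bridge B = ((L₁,T₁),(L₂,T₂),σ) has both an interpretation ι and an elimination ε. Then for every ψ ∈ L₂, T₂ ⊨ ψ ↔ ι(εψ). If in addition B satisfies (sur), then (ι, ε) is a bitranslation: ι and ε are translations, T₁ ⊨ φ ↔ ε(ιφ) for all φ ∈ L₁, and T₂ ⊨ ψ ↔ ι(εψ) for all ψ ∈ L₂. -/
import Mathlib


open FirstOrder Set

universe u v w u₁ v₁ u₂ v₂

namespace PaperStmt

/-- An `𝔏`-fragment: a set of `𝔏`-sentences containing `⊤` and `⊥` and
closed under `∧` and `∨`. -/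
def IsFragment {L : FirstOrder.Language.{u, v}} (F : Set L.Sentence) : Prop :=
  (⊤ : L.Sentence) ∈ F ∧ (⊥ : L.Sentence) ∈ F ∧
    ∀ φ ψ : L.Sentence, φ ∈ F → ψ ∈ F → (φ ⊓ ψ) ∈ F ∧ (φ ⊔ ψ) ∈ F

/-- `T_F = T^⊢ ∩ F`: the consequences of the theory `T` that lie in the fragment `F`. -/
def cons {L : FirstOrder.Language.{u, v}} (T : L.Theory) (F : Set L.Sentence) :
    Set L.Sentence :=
  {φ | φ ∈ F ∧ T ⊨ᵇ φ}

/-- Bundled models of `T` (in the universe matching semantic consequence `⊨ᵇ`). -/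
abbrev Mod {L : FirstOrder.Language.{u, v}} (T : L.Theory) : Type (max u v + 1) :=
  FirstOrder.Language.Theory.ModelType.{u, v, max u v} T

/-- `Th_F(M)`: the sentences in the fragment `F` true in the model `M`. -/
def th {L : FirstOrder.Language.{u, v}} {T : L.Theory} (F : Set L.Sentence) (M : Mod T) :
    Set L.Sentence :=
  {φ | φ ∈ F ∧ M ⊨ φ}

/-- if the bridge `B = ((F₁,T₁),(F₂,T₂),σ)` has both an interpretation `ι`
and an elimination `ε`, then `T₂ ⊨ ψ ↔ ι(εψ)` for every `ψ ∈ F₂`.  If in addition `B`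
satisfies (sur), then `(ι, ε)` is a bitranslation: both are translations,
`T₁ ⊨ φ ↔ ε(ιφ)` for all `φ ∈ F₁`, and `T₂ ⊨ ψ ↔ ι(εψ)` for all `ψ ∈ F₂`. -/
theorem statement_3 {L₁ : FirstOrder.Language.{u₁, v₁}} {L₂ : FirstOrder.Language.{u₂, v₂}}
    {F₁ : Set L₁.Sentence} {F₂ : Set L₂.Sentence} {T₁ : L₁.Theory} {T₂ : L₂.Theory}
    (hF₁ : IsFragment F₁) (hF₂ : IsFragment F₂)
    (σ : Mod T₂ → Mod T₁)
    (ι : L₁.Sentence → L₂.Sentence) (hιF : ∀ φ ∈ F₁, ι φ ∈ F₂)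
    (hι : ∀ φ ∈ F₁, ∀ M : Mod T₂, (σ M ⊨ φ ↔ M ⊨ ι φ))
    (ε : L₂.Sentence → L₁.Sentence) (hεF : ∀ ψ ∈ F₂, ε ψ ∈ F₁)
    (hε : ∀ ψ ∈ F₂, ∀ M : Mod T₂, (σ M ⊨ ε ψ ↔ M ⊨ ψ)) :
    (∀ ψ ∈ F₂, T₂ ⊨ᵇ (ψ ⇔ ι (ε ψ))) ∧
    ((∀ N : Mod T₁, ∃ M : Mod T₂, th F₁ N = th F₁ (σ M)) →
      (∀ φ ∈ F₁, (T₁ ⊨ᵇ φ ↔ T₂ ⊨ᵇ ι φ)) ∧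
      (∀ ψ ∈ F₂, (T₂ ⊨ᵇ ψ ↔ T₁ ⊨ᵇ ε ψ)) ∧
      (∀ φ ∈ F₁, T₁ ⊨ᵇ (φ ⇔ ε (ι φ))) ∧
      (∀ ψ ∈ F₂, T₂ ⊨ᵇ (ψ ⇔ ι (ε ψ)))) := by
  have part1 : ∀ ψ ∈ F₂, T₂ ⊨ᵇ (ψ ⇔ ι (ε ψ)) := by
    intro ψ hψ
    rw [FirstOrder.Language.Theory.models_sentence_iff]
    intro M
    have h1 := hε ψ hψ M
    have h2 := hι (ε ψ) (hεF ψ hψ) M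
    exact FirstOrder.Language.Formula.realize_iff.mpr (h1.symm.trans h2)
  refine ⟨part1, fun hsur => ?_⟩
  have key : ∀ (N : Mod T₁), ∃ M : Mod T₂, ∀ φ ∈ F₁, (N ⊨ φ ↔ σ M ⊨ φ) := by
    intro N
    obtain ⟨M, hM⟩ := hsur N
    refine ⟨M, fun φ hφ => ?_⟩
    constructor
    · intro h
      have : φ ∈ th F₁ N := ⟨hφ, h⟩
      rw [hM] at this; exact this.2
    · intro h
      have : φ ∈ th F₁ (σ M) := ⟨hφ, h⟩
      rw [← hM] at this; exact this.2
  refine ⟨?_, ?_, ?_, part1⟩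
  · intro φ hφ
    rw [FirstOrder.Language.Theory.models_sentence_iff,
      FirstOrder.Language.Theory.models_sentence_iff]
    constructor
    · intro h M
      exact (hι φ hφ M).1 (h (σ M))
    · intro h N
      obtain ⟨M, hM⟩ := key N
      exact (hM φ hφ).2 ((hι φ hφ M).2 (h M))
  · intro ψ hψ
    rw [FirstOrder.Language.Theory.models_sentence_iff,
      FirstOrder.Language.Theory.models_sentence_iff]
    constructor
    · intro h N
      obtain ⟨M, hM⟩ := key N
      exact (hM (ε ψ) (hεF ψ hψ)).2 ((hε ψ hψ M).2 (h M))
    · intro h M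
      exact (hε ψ hψ M).1 (h (σ M))
  · intro φ hφ
    rw [FirstOrder.Language.Theory.models_sentence_iff]
    intro N
    obtain ⟨M, hM⟩ := key N
    have h1 := hM φ hφ
    have h2 := hι φ hφ M
    have h3 := hε (ι φ) (hιF φ hφ) M
    have h4 := hM (ε (ι φ)) (hεF (ι φ) (hιF φ hφ))
    exact FirstOrder.Language.Formula.realize_iff.mpr
      (((h1.trans h2).trans h3.symm).trans h4.symm)

end PaperStmt
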